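/- Let n ≥ 4 be an even integer and let R_(n,2) be the (n,2)-regular graph of order n, i.e., the complete graph K_n with a perfect matching removed, so that every vertex has degree n − 2. Then rvcl(R_(n,2)) = n/2 + 1. -/

import Mathlib

namespace LocatingRainbow

open SimpleGraph

variable {V : Type*}

/-- The internal vertices of a walk: its support without the endpoints. -/
def internalVertices {G : SimpleGraph V} {u v : V} (p : G.Walk u v) : List V :=
  p.support.tail.dropLast

/-- `c` is a rainbow vertex coloring of `G` (with colors in `Fin k`) if any two distinct
vertices are joined by a path whose internal vertices have pairwise distinct colors. -/
def IsRainbowVertexColoring (G : SimpleGraph V) {k : ℕ} (c : V → Fin k) : Prop :=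
  ∀ u v : V, u ≠ v → ∃ p : G.Walk u v, p.IsPath ∧ ((internalVertices p).map c).Nodup

/-- The distance from a vertex `v` to the color class of the color `i`. -/
noncomputable def distToColor (G : SimpleGraph V) {k : ℕ} (c : V → Fin k) (v : V) (i : Fin k) :
    ℕ :=
  sInf {m | ∃ y, c y = i ∧ G.dist v y = m}

/-- The rainbow code of a vertex `v`: the vector of distances to all color classes. -/
noncomputable def rainbowCode (G : SimpleGraph V) {k : ℕ} (c : V → Fin k) (v : V) :
    Fin k → ℕ :=
  fun i => distToColor G c v i

/-- `c` is a locating rainbow coloring if it is a rainbow vertex coloring and distinct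
vertices have distinct rainbow codes. -/
def IsLocatingRainbowColoring (G : SimpleGraph V) {k : ℕ} (c : V → Fin k) : Prop :=
  IsRainbowVertexColoring G c ∧ Function.Injective (rainbowCode G c)

/-- The rainbow vertex connection number of `G`. -/
noncomputable def rvc (G : SimpleGraph V) : ℕ :=
  sInf {k | ∃ c : V → Fin k, IsRainbowVertexColoring G c}

/-- The locating rainbow connection number of `G`. -/
noncomputable def rvcl (G : SimpleGraph V) : ℕ :=
  sInf {k | ∃ c : V → Fin k, IsLocatingRainbowColoring G c}

end LocatingRainbow

namespace LocatingRainbow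

open SimpleGraph

/-- The `(n,2)`-regular graph (for even `n`): the complete graph on `Fin n` with the
perfect matching `{vᵢ v_{i+n/2}}` (indices mod `n`) removed; every vertex has degree
`n - 2`. -/
def Rn2 (n : ℕ) : SimpleGraph (Fin n) where
  Adj i j := i ≠ j ∧ (i.val + n / 2) % n ≠ j.val ∧ (j.val + n / 2) % n ≠ i.val
  symm := ⟨fun _ _ ⟨h1, h2, h3⟩ => ⟨h1.symm, h3, h2⟩⟩
  loopless := ⟨fun _ h => h.1 rfl⟩

/-- The `(n,3)`-regular graph: the complement of the cycle `C_n`, i.e. the complete graph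
with the edges of a Hamiltonian cycle removed; every vertex has degree `n - 3`. -/
def Rn3 (n : ℕ) : SimpleGraph (Fin n) := (cycleGraph n)ᶜ

/-- The `(n,t)`-regular graph for `t ∈ {2, 3}`. -/
def Rnt (n t : ℕ) : SimpleGraph (Fin n) := if t = 2 then Rn2 n else Rn3 n

end LocatingRainbow

namespace LocatingRainbow

open SimpleGraph Finset

section Aux

variable {n m : ℕ}

/-- The antipode of a vertex in `Rn2 (2*m)`. -/
def antv (hn : n = 2 * m) (v : Fin n) : Fin n :=
  ⟨if v.val < m then v.val + m else v.val - m, by have := v.isLt; split <;> omega⟩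

lemma antv_val_mod (hn : n = 2 * m) (hm : 1 ≤ m) (v : Fin n) :
    (v.val + m) % n = (antv hn v).val := by
  have hv := v.isLt
  show _ = (if v.val < m then v.val + m else v.val - m)
  split
  · exact Nat.mod_eq_of_lt (by omega)
  · rw [Nat.mod_eq_sub_mod (by omega)]
    have h1 : v.val + m - n = v.val - m := by omega
    rw [h1, Nat.mod_eq_of_lt (by omega)]

lemma antv_antv (hn : n = 2 * m) (v : Fin n) : antv hn (antv hn v) = v := by
  have hv := v.isLt
  apply Fin.ext
  simp only [antv]
  split_ifs <;> omega

lemma antv_ne (hn : n = 2 * m) (hm : 1 ≤ m) (v : Fin n) : antv hn v ≠ v := by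
  have hv := v.isLt
  intro h
  have := Fin.ext_iff.mp h
  revert this
  show (if v.val < m then v.val + m else v.val - m) = v.val → False
  split <;> omega

lemma antv_inj (hn : n = 2 * m) {u v : Fin n} (h : antv hn u = antv hn v) : u = v := by
  have := congrArg (antv hn) h
  rwa [antv_antv, antv_antv] at this

lemma antv_eq_iff (hn : n = 2 * m) {u v : Fin n} : antv hn u = v ↔ u = antv hn v := by
  constructor
  · rintro rfl; rw [antv_antv]
  · rintro rfl; rw [antv_antv]

lemma rn2_adj_iff (hn : n = 2 * m) (hm : 1 ≤ m) {u v : Fin n} :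
    (Rn2 n).Adj u v ↔ u ≠ v ∧ v ≠ antv hn u := by
  have h2 : n / 2 = m := by omega
  show (u ≠ v ∧ (u.val + n / 2) % n ≠ v.val ∧ (v.val + n / 2) % n ≠ u.val) ↔ _
  rw [h2, antv_val_mod hn hm, antv_val_mod hn hm]
  constructor
  · rintro ⟨h1, h2', _⟩
    exact ⟨h1, fun hv => h2' (by rw [hv])⟩
  · rintro ⟨h1, h4⟩
    refine ⟨h1, fun hv => h4 (Fin.ext hv.symm), fun hv => ?_⟩
    have : antv hn v = u := Fin.ext hv
    exact h4 (by rw [← this, antv_antv])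

lemma rn2_adj_of (hn : n = 2 * m) (hm : 1 ≤ m) {u w : Fin n}
    (h1 : w ≠ u) (h2 : w ≠ antv hn u) : (Rn2 n).Adj u w :=
  (rn2_adj_iff hn hm).mpr ⟨h1.symm, h2⟩

lemma exists_third (hn : n = 2 * m) (hm : 2 ≤ m) (u v : Fin n) :
    ∃ w : Fin n, w ≠ u ∧ w ≠ v := by
  by_contra h
  push_neg at h
  have hsub : (Finset.univ : Finset (Fin n)) ⊆ {u, v} := by
    intro w _
    simp only [Finset.mem_insert, Finset.mem_singleton]
    rcases eq_or_ne w u with h' | h'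
    · exact Or.inl h'
    · exact Or.inr (h w h')
  have := Finset.card_le_card hsub
  have h2 : ({u, v} : Finset (Fin n)).card ≤ 2 := Finset.card_insert_le _ _ |>.trans (by simp)
  simp only [Finset.card_univ, Fintype.card_fin] at this
  omega

lemma rn2_adj_mid (hn : n = 2 * m) (hm : 2 ≤ m) {u w : Fin n}
    (h1 : w ≠ u) (h2 : w ≠ antv hn u) :
    (Rn2 n).Adj u w ∧ (Rn2 n).Adj w (antv hn u) := by
  refine ⟨rn2_adj_of hn (by omega) h1 h2, ?_⟩
  have h3 : antv hn u ≠ antv hn w := fun h => h1 (antv_inj hn h).symm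
  exact rn2_adj_of hn (by omega) h2.symm h3

lemma rn2_reachable (hn : n = 2 * m) (hm : 2 ≤ m) (u v : Fin n) :
    (Rn2 n).Reachable u v := by
  rcases eq_or_ne u v with rfl | huv
  · exact Reachable.refl u
  by_cases hadj : (Rn2 n).Adj u v
  · exact hadj.reachable
  · obtain ⟨w, hwu, hwv⟩ := exists_third hn hm u v
    rw [rn2_adj_iff hn (by omega)] at hadj
    push_neg at hadj
    have hv : v = antv hn u := hadj huv
    obtain ⟨h1, h2⟩ := rn2_adj_mid hn hm hwu (hv ▸ hwv)
    rw [← hv] at h2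
    exact (h1.reachable).trans h2.reachable

lemma rn2_dist_eq_zero_iff (hn : n = 2 * m) (hm : 2 ≤ m) {u v : Fin n} :
    (Rn2 n).dist u v = 0 ↔ u = v :=
  (rn2_reachable hn hm u v).dist_eq_zero_iff

lemma rn2_dist_adj {u v : Fin n} (h : (Rn2 n).Adj u v) : (Rn2 n).dist u v = 1 :=
  SimpleGraph.dist_eq_one_iff_adj.mpr h

lemma rn2_dist_antv (hn : n = 2 * m) (hm : 2 ≤ m) (u : Fin n) :
    (Rn2 n).dist u (antv hn u) = 2 := by
  obtain ⟨w, hwu, hwv⟩ := exists_third hn hm u (antv hn u)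
  obtain ⟨h1, h2⟩ := rn2_adj_mid hn hm hwu hwv
  have hle : (Rn2 n).dist u (antv hn u) ≤ 2 := by
    have := SimpleGraph.dist_le (Walk.cons h1 (Walk.cons h2 Walk.nil))
    simpa using this
  have hne0 : (Rn2 n).dist u (antv hn u) ≠ 0 := fun h =>
    antv_ne hn (by omega) u ((rn2_dist_eq_zero_iff hn hm).mp h).symm
  have hne1 : (Rn2 n).dist u (antv hn u) ≠ 1 := by
    intro h
    have := (rn2_adj_iff hn (by omega)).mp (SimpleGraph.dist_eq_one_iff_adj.mp h)
    exact this.2 rfl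
  omega

lemma dtc_self {k : ℕ} (c : Fin n → Fin k) {v : Fin n} {i : Fin k} (h : c v = i) :
    distToColor (Rn2 n) c v i = 0 :=
  Nat.sInf_eq_zero.mpr (Or.inl ⟨v, h, SimpleGraph.dist_self⟩)

lemma dtc_empty {k : ℕ} (c : Fin n → Fin k) {v : Fin n} {i : Fin k} (h : ∀ y, c y ≠ i) :
    distToColor (Rn2 n) c v i = 0 := by
  apply Nat.sInf_eq_zero.mpr
  right
  ext b
  simp only [Set.mem_setOf_eq, Set.mem_empty_iff_false, iff_false]
  rintro ⟨y, hy, -⟩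
  exact h y hy

lemma dtc_ne_zero (hn : n = 2 * m) (hm : 2 ≤ m) {k : ℕ} (c : Fin n → Fin k) {v : Fin n}
    {i : Fin k} (h1 : c v ≠ i) {y0 : Fin n} (h2 : c y0 = i) :
    distToColor (Rn2 n) c v i ≠ 0 := by
  intro h0
  rcases Nat.sInf_eq_zero.mp h0 with ⟨y, hy, hd⟩ | hemp
  · exact h1 (((rn2_dist_eq_zero_iff hn hm).mp hd) ▸ hy)
  · exact absurd hemp (Set.nonempty_iff_ne_empty.mp ⟨_, y0, h2, rfl⟩)

lemma dtc_one (hn : n = 2 * m) (hm : 2 ≤ m) {k : ℕ} (c : Fin n → Fin k) {v : Fin n}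
    {i : Fin k} (h1 : c v ≠ i) {y : Fin n} (hy : c y = i) (ha : (Rn2 n).Adj v y) :
    distToColor (Rn2 n) c v i = 1 := by
  have hle : distToColor (Rn2 n) c v i ≤ 1 := Nat.sInf_le ⟨y, hy, rn2_dist_adj ha⟩
  have hne := dtc_ne_zero hn hm c h1 hy
  omega

lemma dtc_singleton {k : ℕ} (c : Fin n → Fin k) {v w : Fin n} {i : Fin k}
    (h : ∀ y, c y = i ↔ y = w) :
    distToColor (Rn2 n) c v i = (Rn2 n).dist v w := by
  have hwmem : (Rn2 n).dist v w ∈ {d | ∃ y, c y = i ∧ (Rn2 n).dist v y = d} :=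
    ⟨w, (h w).mpr rfl, rfl⟩
  apply le_antisymm (Nat.sInf_le hwmem)
  apply le_csInf ⟨_, hwmem⟩
  rintro b ⟨y, hy, rfl⟩
  rw [(h y).mp hy]

lemma rn2_rainbow (hn : n = 2 * m) (hm : 2 ≤ m) {k : ℕ} (c : Fin n → Fin k) :
    IsRainbowVertexColoring (Rn2 n) c := by
  intro u v huv
  by_cases hadj : (Rn2 n).Adj u v
  · refine ⟨Walk.cons hadj Walk.nil, ?_, ?_⟩
    · exact (Walk.IsPath.nil).cons (by simp [huv])
    · simp [internalVertices]
  · rw [rn2_adj_iff hn (by omega)] at hadj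
    push_neg at hadj
    have hv : v = antv hn u := hadj huv
    obtain ⟨w, hwu, hwv⟩ := exists_third hn hm u v
    obtain ⟨h1, h2⟩ := rn2_adj_mid hn hm hwu (hv ▸ hwv)
    rw [← hv] at h2
    refine ⟨Walk.cons h1 (Walk.cons h2 Walk.nil), ?_, ?_⟩
    · refine ((Walk.IsPath.nil).cons (by simp [hwv])).cons ?_
      simp only [Walk.support_cons, Walk.support_nil, List.mem_cons]
      push_neg
      exact ⟨hwu.symm, huv, by simp⟩
    · simp [internalVertices]

/-- The coloring used for the upper bound. -/
def upcol (m : ℕ) {n : ℕ} (v : Fin n) : Fin (m + 1) := ⟨min v.val m, by omega⟩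

lemma upcol_class_lt (hn : n = 2 * m) (hm : 2 ≤ m) {a : ℕ} (ha : a < m) (y : Fin n) :
    upcol m y = ⟨a, by omega⟩ ↔ y = (⟨a, by omega⟩ : Fin n) := by
  rw [Fin.ext_iff, Fin.ext_iff]
  show min y.val m = a ↔ y.val = a
  omega

lemma rn2_upper (hn : n = 2 * m) (hm : 2 ≤ m) :
    ∃ c : Fin n → Fin (m + 1), IsLocatingRainbowColoring (Rn2 n) c := by
  refine ⟨upcol m, rn2_rainbow hn hm _, ?_⟩
  intro u v h
  have hcc : upcol m u = upcol m v := by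
    by_contra hne
    have h0 : distToColor (Rn2 n) (upcol m) u (upcol m u) = 0 := dtc_self _ rfl
    have h1 : distToColor (Rn2 n) (upcol m) v (upcol m u) ≠ 0 :=
      dtc_ne_zero hn hm _ (Ne.symm hne) (rfl : upcol m u = upcol m u)
    have he := congrFun h (upcol m u)
    unfold rainbowCode at he
    rw [h0.symm.trans he] at h1
    exact h1 rfl
  by_cases hu : u.val < m
  · have h1 : upcol m v = ⟨u.val, by omega⟩ := by
      rw [← hcc]
      exact (upcol_class_lt hn hm hu u).mpr (Fin.ext rfl)
    have h2 := (upcol_class_lt hn hm hu v).mp h1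
    exact (h2.trans (Fin.ext rfl)).symm
  · by_cases hv : v.val < m
    · have h1 : upcol m u = ⟨v.val, by omega⟩ := by
        rw [hcc]
        exact (upcol_class_lt hn hm hv v).mpr (Fin.ext rfl)
      exact ((upcol_class_lt hn hm hv u).mp h1).trans (Fin.ext rfl)
    · by_contra huv
      push_neg at hu hv
      have hun := u.isLt
      have hvn := v.isLt
      have hvals : u.val ≠ v.val := fun e => huv (Fin.ext e)
      have ha : u.val - m < m := by omega
      obtain ⟨i0, w0, hi0, hw0⟩ :
          ∃ (i0 : Fin (m + 1)) (w0 : Fin n), i0.val = u.val - m ∧ w0.val = u.val - m :=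
        ⟨⟨u.val - m, by omega⟩, ⟨u.val - m, by omega⟩, rfl, rfl⟩
      have hclass : ∀ y : Fin n, upcol m y = i0 ↔ y = w0 := by
        intro y
        have hi : i0 = (⟨u.val - m, by omega⟩ : Fin (m + 1)) := Fin.ext hi0
        have hwe : w0 = (⟨u.val - m, by omega⟩ : Fin n) := Fin.ext hw0
        constructor
        · intro hy
          exact ((upcol_class_lt hn hm ha y).mp (hy.trans hi)).trans hwe.symm
        · intro hy
          exact ((upcol_class_lt hn hm ha y).mpr (hy.trans hwe)).trans hi.symm
      have hw : w0 = antv hn u := by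
        apply Fin.ext
        rw [hw0]
        simp only [antv]
        rw [if_neg (by omega)]
      have h2u : distToColor (Rn2 n) (upcol m) u i0 = 2 := by
        rw [dtc_singleton _ hclass, hw, rn2_dist_antv hn hm]
      have h3 : (antv hn v).val = v.val - m := by
        simp only [antv]
        rw [if_neg (by omega)]
      have hadj : (Rn2 n).Adj v w0 := by
        refine rn2_adj_of hn (by omega) ?_ ?_
        · simp only [ne_eq, Fin.ext_iff, hw0]
          omega
        · simp only [ne_eq, Fin.ext_iff, hw0, h3]
          omega
      have h1v : distToColor (Rn2 n) (upcol m) v i0 = 1 := by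
        rw [dtc_singleton _ hclass]
        exact rn2_dist_adj hadj
      have he := congrFun h i0
      unfold rainbowCode at he
      rw [h2u, h1v] at he
      exact absurd he (by omega)

lemma rn2_lower (hn : n = 2 * m) (hm : 2 ≤ m) {k : ℕ} (c : Fin n → Fin k)
    (hc : IsLocatingRainbowColoring (Rn2 n) c) : m + 1 ≤ k := by
  classical
  by_contra hk
  push_neg at hk
  -- `Lonely v` : `v` is the unique vertex of its color.
  set Lonely : Fin n → Prop := fun v => ∀ y, c y = c v → y = v with hLdef
  -- key step: two vertices of the same color whose antipodes are not lonely are equal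
  have main : ∀ x : Fin n, ∀ i : Fin k, c x ≠ i → (∃ y, c y = i) → ¬ Lonely (antv hn x) →
      distToColor (Rn2 n) c x i = 1 := by
    intro x i hx hex hlx
    obtain ⟨y0, hy0⟩ := hex
    have hexy : ∃ y, c y = i ∧ y ≠ antv hn x := by
      by_contra hcon
      push_neg at hcon
      have h1 : y0 = antv hn x := hcon y0 hy0
      apply hlx
      intro z hz
      have hca : c (antv hn x) = i := h1 ▸ hy0
      exact hcon z (hz.trans hca)
    obtain ⟨y, hy, hyne⟩ := hexy
    have hyx : y ≠ x := fun e => hx (e ▸ hy)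
    exact dtc_one hn hm c hx hy (rn2_adj_of hn (by omega) hyx hyne)
  have key : ∀ u v : Fin n, c u = c v → ¬ Lonely (antv hn u) → ¬ Lonely (antv hn v) →
      u = v := by
    intro u v hcv hu hv
    apply hc.2
    funext i
    show distToColor (Rn2 n) c u i = distToColor (Rn2 n) c v i
    by_cases hex : ∃ y, c y = i
    · by_cases hi : i = c u
      · rw [dtc_self c hi.symm, dtc_self c (hcv ▸ hi.symm : c v = i)]
      · rw [main u i (fun e => hi e.symm) hex hu,
          main v i (fun e => hi (hcv.trans e).symm) hex hv]
    · push_neg at hex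
      rw [dtc_empty c hex, dtc_empty c hex]
  set L : Finset (Fin n) := Finset.univ.filter Lonely with hLsetdef
  have hLonelyInj : Set.InjOn c L := by
    intro u hu v hv he
    exact ((Finset.mem_filter.mp hu).2 v he.symm).symm
  have hLcard : L.card ≤ k := by
    have := Finset.card_le_card_of_injOn c (fun a _ => Finset.mem_univ (c a)) hLonelyInj
    simpa using this
  have hS1Inj : Set.InjOn c (Finset.univ.filter (fun v => ¬ Lonely (antv hn v))) := by
    intro u hu v hv he
    exact key u v he (Finset.mem_filter.mp hu).2 (Finset.mem_filter.mp hv).2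
  have hS1card : (Finset.univ.filter (fun v => ¬ Lonely (antv hn v))).card ≤ k := by
    have := Finset.card_le_card_of_injOn c (fun a _ => Finset.mem_univ (c a)) hS1Inj
    simpa using this
  have hmap : Finset.univ.filter (fun v => ¬ Lonely (antv hn v))
      = (Finset.univ.filter (fun w => ¬ Lonely w)).image (antv hn) := by
    ext v
    simp only [Finset.mem_filter, Finset.mem_univ, true_and, Finset.mem_image]
    constructor
    · intro hv
      exact ⟨antv hn v, hv, antv_antv hn v⟩
    · rintro ⟨w, hw, rfl⟩
      rwa [antv_antv]
  have hcompl : (Finset.univ.filter (fun w => ¬ Lonely w)).card = n - L.card := by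
    rw [Finset.filter_not, Finset.card_sdiff_of_subset (Finset.filter_subset _ _)]
    simp [hLsetdef]
  have hS1card' : (Finset.univ.filter (fun v => ¬ Lonely (antv hn v))).card = n - L.card := by
    rw [hmap, Finset.card_image_of_injective _ (fun a b h => antv_inj hn h), hcompl]
  rw [hS1card'] at hS1card
  -- now `n - L.card ≤ k ≤ m` and `L.card ≤ k`, so `L.card = k = m`
  have hLk : L.card = k := by omega
  have himg : (L.image c).card = k := by
    rw [Finset.card_image_of_injOn hLonelyInj, hLk]
  have huniv : L.image c = Finset.univ :=
    Finset.eq_univ_of_card _ (himg.trans (Fintype.card_fin k).symm)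
  have hall : ∀ v : Fin n, v ∈ L := by
    intro v
    have hv : c v ∈ L.image c := huniv ▸ Finset.mem_univ _
    obtain ⟨l, hl, hcl⟩ := Finset.mem_image.mp hv
    have hlonely := (Finset.mem_filter.mp hl).2
    have : v = l := hlonely v hcl.symm
    rwa [this]
  have hbig : (Finset.univ : Finset (Fin n)).card ≤ L.card :=
    Finset.card_le_card (fun v _ => hall v)
  simp only [Finset.card_univ, Fintype.card_fin] at hbig
  omega

end Aux

end LocatingRainbow


open LocatingRainbow in
/-- For even `n ≥ 4`, the `(n,2)`-regular graph (complete graph minus a perfect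
matching) satisfies `rvcl(R_(n,2)) = n/2 + 1`. -/
theorem rvcl_Rn2 {n : ℕ} (hn : 4 ≤ n) (hpar : Even n) :
    rvcl (Rn2 n) = n / 2 + 1 := by
  obtain ⟨m, hm2⟩ := hpar
  have hn2 : n = 2 * m := by omega
  have hm : 2 ≤ m := by omega
  have hdiv : n / 2 = m := by omega
  rw [hdiv]
  have hmem : (m + 1) ∈ {k | ∃ c : Fin n → Fin k, IsLocatingRainbowColoring (Rn2 n) c} :=
    rn2_upper hn2 hm
  refine le_antisymm (Nat.sInf_le hmem) (le_csInf ⟨_, hmem⟩ ?_)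
  rintro k ⟨c, hc⟩
  exact rn2_lower hn2 hm c hc
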